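/- Let R > 1 and let X, Y be points in the plane with 1 ≤ |X| ≤ R and |Y| ≥ R. Suppose dist(X,Y) ≥ |Y| − 1. Then the distance from X to the radial projection B = R·Y/|Y| of Y onto the circle of radius R centered at the origin satisfies dist(X,B) ≥ R − 1. -/

import Mathlib

/-- Radial projection lemma, part (b). -/
theorem stmt_1 (R : ℝ) (X Y : EuclideanSpace ℝ (Fin 2))
    (hR : 1 < R) (hX1 : 1 ≤ ‖X‖) (hXR : ‖X‖ ≤ R) (hYR : R ≤ ‖Y‖)
    (hXY : ‖Y‖ - 1 ≤ dist X Y) :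
    R - 1 ≤ dist X ((R / ‖Y‖) • Y) := by
  have hR0 : (0:ℝ) < R := by linarith
  have hy : (0:ℝ) < ‖Y‖ := lt_of_lt_of_le hR0 hYR
  have h1 : dist X Y ^ 2 = ‖X‖ ^ 2 + ‖Y‖ ^ 2 - 2 * (inner ℝ X Y : ℝ) := by
    rw [dist_eq_norm, norm_sub_sq_real]; ring
  have h2 : dist X ((R / ‖Y‖) • Y) ^ 2
      = ‖X‖ ^ 2 + R ^ 2 - 2 * (R / ‖Y‖) * (inner ℝ X Y : ℝ) := by
    rw [dist_eq_norm, norm_sub_sq_real, norm_smul, real_inner_smul_right,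
      Real.norm_eq_abs, abs_of_pos (div_pos hR0 hy)]
    have : R / ‖Y‖ * ‖Y‖ = R := div_mul_cancel₀ R (ne_of_gt hy)
    rw [this]; ring
  have hkey : 2 * (inner ℝ X Y : ℝ) ≤ ‖X‖ ^ 2 + 2 * ‖Y‖ - 1 := by
    have hd2 : (‖Y‖ - 1) ^ 2 ≤ dist X Y ^ 2 := by
      have h0 : (0:ℝ) ≤ ‖Y‖ - 1 := by linarith
      nlinarith [dist_nonneg (x := X) (y := Y)]
    nlinarith
  have hRy : R / ‖Y‖ ≤ 1 := (div_le_one hy).mpr hYR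
  have hRy0 : 0 < R / ‖Y‖ := div_pos hR0 hy
  have hsq : (R - 1) ^ 2 ≤ dist X ((R / ‖Y‖) • Y) ^ 2 := by
    have hmul : (R / ‖Y‖) * (2 * (inner ℝ X Y : ℝ)) ≤ (R / ‖Y‖) * (‖X‖ ^ 2 + 2 * ‖Y‖ - 1) :=
      mul_le_mul_of_nonneg_left hkey (le_of_lt hRy0)
    have hRyy : (R / ‖Y‖) * ‖Y‖ = R := div_mul_cancel₀ R (ne_of_gt hy)
    nlinarith [mul_nonneg (sub_nonneg.mpr hRy)
      (by nlinarith : (0:ℝ) ≤ ‖X‖ ^ 2 - 1)]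
  nlinarith [dist_nonneg (x := X) (y := (R / ‖Y‖) • Y)]
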